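/- arXiv:2405.04934 — 6 statements merged into one kernel-verified Lean document; each statement's English description precedes it below -/
import Mathlib

section
/- Let R be a finite commutative ring with identity having at least one nonzero zero-divisor. Then Ddim(Γ_E(R)) = 0 (equivalently, Γ_E(R) has exactly one vertex, i.e., all nonzero zero-divisors of R have the same annihilator) if and only if xy = 0 for all (not necessarily distinct) nonzero zero-divisors x, y of R. -/
open SimpleGraph

/-- `Zstar R` is the set of nonzero zero-divisors of the commutative ring `R`. -/
def Zstar (R : Type*) [CommRing R] : Set R :=
  {x : R | x ≠ 0 ∧ ∃ y : R, y ≠ 0 ∧ x * y = 0}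

/-- `annSet R x` is the annihilator of `x`, i.e. `{y : R | x * y = 0}`. -/
def annSet (R : Type*) [CommRing R] (x : R) : Set R :=
  {y : R | x * y = 0}

/-- Two nonzero zero-divisors are equivalent iff they have the same annihilator. -/
instance zdvSetoid (R : Type*) [CommRing R] : Setoid (Zstar R) :=
  ⟨fun a b => annSet R a.1 = annSet R b.1, ⟨fun _ => rfl, Eq.symm, Eq.trans⟩⟩

/-- The vertices of the compressed zero-divisor graph `Γ_E(R)`: equivalence
classes `[x]` of nonzero zero-divisors under equality of annihilators. -/
abbrev CZDVertex (R : Type*) [CommRing R] : Type _ :=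
  Quotient (zdvSetoid R)

/-- The compressed zero-divisor graph `Γ_E(R)`: distinct classes `[x]` and `[y]`
are adjacent iff `x * y = 0` (which is independent of the chosen representatives). -/
def CZDG (R : Type*) [CommRing R] : SimpleGraph (CZDVertex R) where
  Adj u v := u ≠ v ∧ ∃ a b : Zstar R,
    (⟦a⟧ : CZDVertex R) = u ∧ (⟦b⟧ : CZDVertex R) = v ∧ (a : R) * b = 0
  symm := by
    constructor
    rintro u v ⟨huv, a, b, ha, hb, hab⟩
    exact ⟨huv.symm, b, a, hb, ha, by rwa [mul_comm]⟩
  loopless := by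
    constructor
    rintro u ⟨h, -⟩
    exact h rfl

/-- A set `W` of vertices is resolving if any two distinct vertices have
different distance to some vertex of `W`. -/
def IsResolving {V : Type*} (G : SimpleGraph V) (W : Set V) : Prop :=
  ∀ u v : V, u ≠ v → ∃ w ∈ W, G.dist u w ≠ G.dist v w

/-- A set `W` of vertices is dominating if every vertex outside `W` is adjacent
to some vertex of `W`. -/
def IsDominating {V : Type*} (G : SimpleGraph V) (W : Set V) : Prop :=
  ∀ v : V, v ∉ W → ∃ w ∈ W, G.Adj v w

/-- The dominant metric dimension `Ddim G`: the minimum cardinality of a set of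
vertices that is simultaneously resolving and dominating, with the convention
that it is `0` for a graph with exactly one vertex. -/
noncomputable def Ddim {V : Type*} (G : SimpleGraph V) : ℕ∞ :=
  if Nat.card V = 1 then 0
  else sInf {n : ℕ∞ | ∃ W : Set V, IsResolving G W ∧ IsDominating G W ∧ W.encard = n}


lemma ddim_zero_iff_card (R : Type*) [CommRing R] [Finite R]
    (hz : (Zstar R).Nonempty) :
    Ddim (CZDG R) = 0 ↔ Nat.card (CZDVertex R) = 1 := by
  constructor
  · intro h
    by_contra hc
    unfold Ddim at h
    rw [if_neg hc] at h
    have h0 : (0 : ℕ∞) ∈ {n : ℕ∞ | ∃ W : Set (CZDVertex R),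
        IsResolving (CZDG R) W ∧ IsDominating (CZDG R) W ∧ W.encard = n} := by
      by_contra h0
      have h1 : (1 : ℕ∞) ≤ sInf {n : ℕ∞ | ∃ W : Set (CZDVertex R),
          IsResolving (CZDG R) W ∧ IsDominating (CZDG R) W ∧ W.encard = n} := by
        refine le_sInf fun n hn => ?_
        have : n ≠ 0 := fun hn0 => h0 (hn0 ▸ hn)
        exact ENat.one_le_iff_ne_zero.mpr this
      rw [h] at h1
      exact absurd h1 (by norm_num)
    obtain ⟨W, _, hdom, hW⟩ := h0
    rw [Set.encard_eq_zero] at hW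
    subst hW
    obtain ⟨x, hx⟩ := hz
    obtain ⟨w, hw, -⟩ := hdom (⟦⟨x, hx⟩⟧ : CZDVertex R) (Set.notMem_empty _)
    exact hw
  · intro h
    unfold Ddim
    rw [if_pos h]

lemma card_iff_ann (R : Type*) [CommRing R] [Finite R]
    (hz : (Zstar R).Nonempty) :
    Nat.card (CZDVertex R) = 1 ↔
      ∀ x ∈ Zstar R, ∀ y ∈ Zstar R, annSet R x = annSet R y := by
  rw [Nat.card_eq_one_iff_unique]
  constructor
  · rintro ⟨hs, -⟩ x hx y hy
    have : (⟦⟨x, hx⟩⟧ : CZDVertex R) = ⟦⟨y, hy⟩⟧ := hs.elim _ _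
    exact Quotient.exact this
  · intro h
    obtain ⟨x, hx⟩ := hz
    refine ⟨⟨fun u v => ?_⟩, ⟨⟦⟨x, hx⟩⟧⟩⟩
    induction u using Quotient.ind
    induction v using Quotient.ind
    rename_i a b
    exact Quotient.sound (h a.1 a.2 b.1 b.2)

lemma ann_iff_mul (R : Type*) [CommRing R] :
    (∀ x ∈ Zstar R, ∀ y ∈ Zstar R, annSet R x = annSet R y) ↔
      ∀ x ∈ Zstar R, ∀ y ∈ Zstar R, x * y = 0 := by
  constructor
  · intro h x hx y hy
    obtain ⟨w, hw0, hxw⟩ := hx.2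
    have hx0 := hx.1
    have hwZ : w ∈ Zstar R := ⟨hw0, x, hx0, by rwa [mul_comm]⟩
    have hxx : x * x = 0 := by
      have := h x hx w hwZ
      have hxw' : x ∈ annSet R w := by simpa [annSet, mul_comm] using hxw
      rw [← this] at hxw'
      exact hxw'
    have : x ∈ annSet R y := by
      rw [← h x hx y hy]; exact hxx
    simpa [annSet, mul_comm] using this
  · intro h x hx y hy
    ext z
    simp only [annSet, Set.mem_setOf_eq]
    constructor
    · intro hxz
      rcases eq_or_ne z 0 with rfl | hz0
      · simp
      · exact h y hy z ⟨hz0, x, hx.1, by rwa [mul_comm]⟩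
    · intro hyz
      rcases eq_or_ne z 0 with rfl | hz0
      · simp
      · exact h x hx z ⟨hz0, y, hy.1, by rwa [mul_comm]⟩

/-- For a finite commutative ring `R` with at least one nonzero
zero-divisor, `Ddim (Γ_E R) = 0` (equivalently, `Γ_E R` has exactly one vertex,
i.e. all nonzero zero-divisors have the same annihilator) iff `x * y = 0` for
all (not necessarily distinct) nonzero zero-divisors `x, y`. -/
theorem stmt_0 (R : Type*) [CommRing R] [Finite R] (hz : (Zstar R).Nonempty) :
    (Ddim (CZDG R) = 0 ↔ Nat.card (CZDVertex R) = 1) ∧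
    (Ddim (CZDG R) = 0 ↔ ∀ x ∈ Zstar R, ∀ y ∈ Zstar R, annSet R x = annSet R y) ∧
    (Ddim (CZDG R) = 0 ↔ ∀ x ∈ Zstar R, ∀ y ∈ Zstar R, x * y = 0) := by

  refine ⟨ddim_zero_iff_card R hz, ?_, ?_⟩
  · rw [ddim_zero_iff_card R hz]; exact card_iff_ann R hz
  · rw [ddim_zero_iff_card R hz, card_iff_ann R hz]; exact ann_iff_mul R
end

section
/- Let R be a finite commutative ring with identity having at least one nonzero zero-divisor and not isomorphic (as a ring) to Z_2 × Z_2. Then Ddim(Γ_E(R)) = 0 (equivalently, Γ_E(R) has exactly one vertex) if and only if xy = 0 for all distinct nonzero zero-divisors x, y of R (equivalently, the zero-divisor graph Γ(R) is complete, i.e., diam(Γ(R)) ≤ 1). -/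
open SimpleGraph

section Aux

variable {R : Type*} [CommRing R]

lemma sq_zero_of_ann_eq [Finite R]
    (hann : ∀ a ∈ Zstar R, ∀ b ∈ Zstar R, annSet R a = annSet R b) :
    ∀ z ∈ Zstar R, z * z = 0 := by
  classical
  intro z hzs
  by_contra hz2
  obtain ⟨hzne, w, hwne, hzw⟩ := id hzs
  have h10 : (1 : R) ≠ 0 := fun h => hzne (by rw [← mul_one z, h, mul_zero])
  have hpow : ∀ n : ℕ, z ^ (n + 1) * w = 0 := by
    intro n; rw [pow_succ, mul_assoc, hzw, mul_zero]
  have main : ∀ a b : ℕ, a < b → z ^ a = z ^ b → False := by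
    intro a b hlt heq
    by_cases hnil : ∃ n, z ^ n = 0
    · set n := Nat.find hnil with hn
      have hzn : z ^ n = 0 := Nat.find_spec hnil
      have h0 : z ^ 0 ≠ 0 := by simpa using h10
      have h1 : z ^ 1 ≠ 0 := by simpa using hzne
      have h2' : z ^ 2 ≠ 0 := by rw [pow_two]; exact hz2
      have h3n : 3 ≤ n := by
        rcases Nat.lt_or_ge n 3 with h | h
        · exfalso; interval_cases n
          exacts [h0 hzn, h1 hzn, h2' hzn]
        · exact h
      have hzn1 : z ^ (n - 1) ≠ 0 := Nat.find_min hnil (by omega)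
      have hzn1z : z ^ (n - 1) * z = 0 := by
        rw [← pow_succ, show n - 1 + 1 = n by omega, hzn]
      have hZn1 : z ^ (n - 1) ∈ Zstar R := ⟨hzn1, z, hzne, hzn1z⟩
      have hmem : z ∈ annSet R (z ^ (n - 1)) := hzn1z
      rw [hann _ hZn1 z hzs] at hmem
      exact hz2 hmem
    · push_neg at hnil
      have hzb : z ^ b * w = 0 := by
        have := hpow (b - 1); rwa [show b - 1 + 1 = b by omega] at this
      by_cases ha0 : a = 0
      · subst ha0
        apply hwne
        calc w = z ^ 0 * w := by simp
          _ = z ^ b * w := by rw [heq]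
          _ = 0 := hzb
      · have hzaw : z ^ a * w = 0 := by
          have := hpow (a - 1); rwa [show a - 1 + 1 = a by omega] at this
        have hA : z ^ a ∈ Zstar R := ⟨hnil a, w, hwne, hzaw⟩
        have hkey : z ^ a * (1 - z ^ (b - a)) = 0 := by
          have h' : z ^ a * (1 - z ^ (b - a)) = z ^ a - z ^ (a + (b - a)) := by
            rw [mul_sub, mul_one, pow_add]
          rw [h', show a + (b - a) = b by omega, heq, sub_self]
        by_cases hone : (1 : R) - z ^ (b - a) = 0
        · apply hwne
          have h1' : z ^ (b - a) = 1 := (sub_eq_zero.mp hone).symm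
          have h2w : z ^ (b - a) * w = 0 := by
            have := hpow (b - a - 1); rwa [show b - a - 1 + 1 = b - a by omega] at this
          rwa [h1', one_mul] at h2w
        · have hZ1 : (1 - z ^ (b - a)) ∈ Zstar R := ⟨hone, z ^ a, hnil a, by rwa [mul_comm]⟩
          have hmem : (1 - z ^ (b - a)) ∈ annSet R (z ^ a) := hkey
          rw [hann _ hA z hzs] at hmem
          have hmem' : z * (1 - z ^ (b - a)) = 0 := hmem
          have hzc : z = z ^ (b - a + 1) := by
            have h1' : z - z ^ (b - a + 1) = 0 := by
              rw [← hmem', mul_sub, mul_one, pow_succ, mul_comm]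
            exact sub_eq_zero.mp h1'
          set c := b - a + 1 with hc
          have hc2 : 2 ≤ c := by omega
          set e := z ^ (c - 1) with he
          have hee : e * e = e := by
            have h1' : e * e = z ^ c * z ^ (c - 2) := by
              rw [he, ← pow_add, ← pow_add]; congr 1; omega
            have h2' : z * z ^ (c - 2) = z ^ (c - 1) := by
              rw [show c - 1 = c - 2 + 1 by omega, pow_succ, mul_comm]
            rw [h1', ← hzc, h2']
          have hene : e ≠ 0 := by
            intro h
            apply hzne
            rw [hzc, show c = c - 1 + 1 by omega, pow_succ, ← he, h, zero_mul]
          have hew : e * w = 0 := by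
            have := hpow (c - 2); rwa [show c - 2 + 1 = c - 1 by omega, ← he] at this
          have heZ : e ∈ Zstar R := ⟨hene, w, hwne, hew⟩
          have he1 : e ≠ 1 := fun h => hwne (by rw [← one_mul w, ← h, hew])
          have hfne : (1 : R) - e ≠ 0 := sub_ne_zero.mpr (Ne.symm he1)
          have hfmul : (1 - e) * e = 0 := by rw [sub_mul, one_mul, hee, sub_self]
          have hfZ : (1 - e) ∈ Zstar R := ⟨hfne, e, hene, hfmul⟩
          have hmem2 : e ∈ annSet R (1 - e) := hfmul
          rw [hann _ hfZ e heZ] at hmem2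
          have hmem2' : e * e = 0 := hmem2
          exact hene (by rw [← hee, hmem2'])
  obtain ⟨a, b, hab, heq⟩ := Finite.exists_ne_map_eq_of_infinite (fun n : ℕ => z ^ n)
  rcases hab.lt_or_gt with h | h
  · exact main a b h heq
  · exact main b a h heq.symm

lemma mul_eq_zero_of_ann_eq [Finite R]
    (hann : ∀ a ∈ Zstar R, ∀ b ∈ Zstar R, annSet R a = annSet R b) :
    ∀ x ∈ Zstar R, ∀ y ∈ Zstar R, x * y = 0 := by
  intro x hx y hy
  have hy2 : y * y = 0 := sq_zero_of_ann_eq hann y hy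
  have hmem : y ∈ annSet R y := hy2
  rw [hann y hy x hx] at hmem
  exact hmem

lemma sq_zero_of_complete (hiso : ¬Nonempty (R ≃+* (ZMod 2 × ZMod 2)))
    (hcomp : ∀ x ∈ Zstar R, ∀ y ∈ Zstar R, x ≠ y → x * y = 0) :
    ∀ z ∈ Zstar R, z * z = 0 := by
  intro z hzs
  by_contra hz2
  obtain ⟨hzne, w, hwne, hzw⟩ := id hzs
  have hz2w : (z * z) * w = 0 := by rw [mul_assoc, hzw, mul_zero]
  have hz2Z : z * z ∈ Zstar R := ⟨hz2, w, hwne, hz2w⟩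
  have hidem : z * z = z := by
    by_contra hne
    have h3 : z * (z * z) = 0 := hcomp z hzs (z * z) hz2Z (Ne.symm hne)
    set s := z + z * z with hs
    have hsz : s * z = z * z := by
      have h' : s * z = z * z + z * (z * z) := by rw [hs]; ring
      rw [h', h3, add_zero]
    have hsne : s ≠ 0 := fun h => hz2 (by rw [← hsz, h, zero_mul])
    have hsz2 : s * (z * z) = 0 := by
      have h' : s * (z * z) = z * (z * z) + (z * (z * z)) * z := by rw [hs]; ring
      rw [h', h3, zero_mul, add_zero]
    have hsZ : s ∈ Zstar R := ⟨hsne, z * z, hz2, hsz2⟩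
    have hszne : s ≠ z := fun h => hz2 (by
      have hh : z + z * z = z := by rw [← hs, h]
      exact add_eq_left.mp hh)
    have h0 : s * z = 0 := hcomp s hsZ z hzs hszne
    exact hz2 (by rw [← hsz, h0])
  have he1 : z ≠ 1 := fun h => hwne (by rw [← one_mul w, ← h, hzw])
  have hfne : (1 : R) - z ≠ 0 := sub_ne_zero.mpr (Ne.symm he1)
  have hfz : (1 - z) * z = 0 := by rw [sub_mul, one_mul, hidem, sub_self]
  have hfZ : (1 - z) ∈ Zstar R := ⟨hfne, z, hzne, hfz⟩
  have hf2 : (1 - z) * (1 - z) = 1 - z := by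
    have h' : (1 - z) * (1 - z) = 1 - z - (1 - z) * z := by ring
    rw [h', hfz, sub_zero]
  have hsub : ∀ y ∈ Zstar R, y = z ∨ y = 1 - z := by
    intro y hy
    by_contra hor
    push_neg at hor
    obtain ⟨hy1', hy2'⟩ := hor
    have hy1 : y * z = 0 := hcomp y hy z hzs hy1'
    have hy2 : y * (1 - z) = 0 := hcomp y hy (1 - z) hfZ hy2'
    exact hy.1 (by
      have h' : y = y * z + y * (1 - z) := by ring
      rw [h', hy1, hy2, add_zero])
  have hre : ∀ a : R, a * z = 0 ∨ a * z = z := by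
    intro a
    by_cases h0 : a * z = 0
    · exact Or.inl h0
    · right
      have hmw : (a * z) * (1 - z) = 0 := by
        have h' : (a * z) * (1 - z) = a * ((1 - z) * z) := by ring
        rw [h', hfz, mul_zero]
      have hZ : a * z ∈ Zstar R := ⟨h0, 1 - z, hfne, hmw⟩
      rcases hsub _ hZ with h | h
      · exact h
      · exfalso
        apply h0
        have h2' : (a * z) * z = a * z := by rw [mul_assoc, hidem]
        rw [← h2', h, hfz]
  have hrf : ∀ a : R, a * (1 - z) = 0 ∨ a * (1 - z) = 1 - z := by
    intro a
    by_cases h0 : a * (1 - z) = 0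
    · exact Or.inl h0
    · right
      have hmw : (a * (1 - z)) * z = 0 := by
        have h' : (a * (1 - z)) * z = a * ((1 - z) * z) := by ring
        rw [h', hfz, mul_zero]
      have hZ : a * (1 - z) ∈ Zstar R := ⟨h0, z, hzne, hmw⟩
      rcases hsub _ hZ with h | h
      · exfalso
        apply h0
        have h2' : (a * (1 - z)) * (1 - z) = a * (1 - z) := by rw [mul_assoc, hf2]
        rw [← h2', h, mul_comm, hfz]
      · exact h
  have h2z : z + z = 0 := by
    rcases hre (1 + 1) with h | h
    · calc z + z = (1 + 1) * z := by ring
        _ = 0 := h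
    · exfalso
      apply hzne
      have hh : z + z = z := by rw [show z + z = (1 + 1) * z by ring, h]
      exact add_eq_left.mp hh
  have h2f : (1 - z) + (1 - z) = 0 := by
    rcases hrf (1 + 1) with h | h
    · calc (1 - z) + (1 - z) = (1 + 1) * (1 - z) := by ring
        _ = 0 := h
    · exfalso
      apply hfne
      have hh : (1 - z) + (1 - z) = 1 - z := by
        rw [show (1 - z) + (1 - z) = (1 + 1) * (1 - z) by ring, h]
      exact add_eq_left.mp hh
  have h2 : (2 : R) = 0 := by
    have h' : (2 : R) = (z + z) + ((1 - z) + (1 - z)) := by ring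
    rw [h', h2z, h2f, add_zero]
  have h10 : (1 : R) ≠ 0 := fun h => hzne (by rw [← mul_one z, h, mul_zero])
  haveI : CharP R 2 := by
    constructor
    intro n
    have hmod : (n : R) = ((n % 2 : ℕ) : R) := by
      conv_lhs => rw [← Nat.mod_add_div n 2]
      push_cast
      rw [h2, zero_mul, add_zero]
    constructor
    · intro h
      rw [hmod] at h
      rcases Nat.mod_two_eq_zero_or_one n with h0 | h1
      · exact Nat.dvd_of_mod_eq_zero h0
      · rw [h1] at h; simp at h; exact absurd h h10
    · rintro ⟨k, rfl⟩
      push_cast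
      rw [h2, zero_mul]
  set χ : ZMod 2 →+* R := ZMod.castHom dvd_rfl R with hχ
  have hcases : ∀ c : ZMod 2, c = 0 ∨ c = 1 := by decide
  set ψ : ZMod 2 × ZMod 2 →+* R :=
    { toFun := fun p => χ p.1 * z + χ p.2 * (1 - z)
      map_one' := by simp
      map_mul' := fun p q => by
        show χ (p.1 * q.1) * z + χ (p.2 * q.2) * (1 - z) =
          (χ p.1 * z + χ p.2 * (1 - z)) * (χ q.1 * z + χ q.2 * (1 - z))
        have expand : (χ p.1 * z + χ p.2 * (1 - z)) * (χ q.1 * z + χ q.2 * (1 - z)) =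
            (χ p.1 * χ q.1) * (z * z) +
            (χ p.1 * χ q.2 + χ p.2 * χ q.1) * ((1 - z) * z) +
            (χ p.2 * χ q.2) * ((1 - z) * (1 - z)) := by ring
        rw [expand, hidem, hfz, hf2, map_mul, map_mul]
        ring
      map_zero' := by simp
      map_add' := fun p q => by
        show χ (p.1 + q.1) * z + χ (p.2 + q.2) * (1 - z) = _
        rw [map_add, map_add]; ring } with hψ
  have hinj : Function.Injective ψ := by
    rw [injective_iff_map_eq_zero]
    intro p hp
    have hp' : χ p.1 * z + χ p.2 * (1 - z) = 0 := hp
    have hp1 : χ p.1 * z = 0 := by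
      have h0 : (χ p.1 * z + χ p.2 * (1 - z)) * z = 0 := by rw [hp', zero_mul]
      have h2' : (χ p.1 * z + χ p.2 * (1 - z)) * z =
          χ p.1 * (z * z) + χ p.2 * ((1 - z) * z) := by ring
      rw [h2', hidem, hfz, mul_zero, add_zero] at h0
      exact h0
    have hp2 : χ p.2 * (1 - z) = 0 := by
      have h0 : (χ p.1 * z + χ p.2 * (1 - z)) * (1 - z) = 0 := by rw [hp', zero_mul]
      have h2' : (χ p.1 * z + χ p.2 * (1 - z)) * (1 - z) =
          χ p.1 * ((1 - z) * z) + χ p.2 * ((1 - z) * (1 - z)) := by ring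
      rw [h2', hfz, mul_zero, zero_add, hf2] at h0
      exact h0
    have e1 : p.1 = 0 := by
      rcases hcases p.1 with h | h
      · exact h
      · exfalso; rw [h, map_one, one_mul] at hp1; exact hzne hp1
    have e2 : p.2 = 0 := by
      rcases hcases p.2 with h | h
      · exact h
      · exfalso; rw [h, map_one, one_mul] at hp2; exact hfne hp2
    exact Prod.ext e1 e2
  have hsurj : Function.Surjective ψ := by
    intro r
    have hr : r = r * z + r * (1 - z) := by ring
    rcases hre r with h1 | h1 <;> rcases hrf r with h2 | h2
    · refine ⟨(0, 0), ?_⟩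
      show χ 0 * z + χ 0 * (1 - z) = r
      rw [map_zero, zero_mul, zero_mul, add_zero, hr, h1, h2, add_zero]
    · refine ⟨(0, 1), ?_⟩
      show χ 0 * z + χ 1 * (1 - z) = r
      rw [map_zero, map_one, zero_mul, one_mul, zero_add, hr, h1, h2, zero_add]
    · refine ⟨(1, 0), ?_⟩
      show χ 1 * z + χ 0 * (1 - z) = r
      rw [map_zero, map_one, zero_mul, one_mul, add_zero, hr, h1, h2, add_zero]
    · refine ⟨(1, 1), ?_⟩
      show χ 1 * z + χ 1 * (1 - z) = r
      rw [map_one, one_mul, one_mul, hr, h1, h2]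
  exact hiso ⟨(RingEquiv.ofBijective ψ ⟨hinj, hsurj⟩).symm⟩

end Aux

/-- For a finite commutative ring `R` with at least one nonzero
zero-divisor and not isomorphic to `ℤ/2 × ℤ/2`, `Ddim (Γ_E R) = 0`
(equivalently `Γ_E R` has exactly one vertex) iff `x * y = 0` for all distinct
nonzero zero-divisors `x, y` (i.e. the zero-divisor graph `Γ(R)` is complete). -/
theorem stmt_2 (R : Type*) [CommRing R] [Finite R] (hz : (Zstar R).Nonempty)
    (hiso : ¬Nonempty (R ≃+* (ZMod 2 × ZMod 2))) :
    (Ddim (CZDG R) = 0 ↔ Nat.card (CZDVertex R) = 1) ∧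
    (Ddim (CZDG R) = 0 ↔ ∀ x ∈ Zstar R, ∀ y ∈ Zstar R, x ≠ y → x * y = 0) := by
  have hv : Nonempty (CZDVertex R) := ⟨⟦⟨hz.choose, hz.choose_spec⟩⟧⟩
  have part1 : Ddim (CZDG R) = 0 ↔ Nat.card (CZDVertex R) = 1 := by
    constructor
    · intro h
      by_contra hc
      rw [Ddim, if_neg hc] at h
      have h1 : (1 : ℕ∞) ≤ sInf {n : ℕ∞ | ∃ W : Set (CZDVertex R),
          IsResolving (CZDG R) W ∧ IsDominating (CZDG R) W ∧ W.encard = n} := by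
        apply le_sInf
        rintro b ⟨W, hres, hdom, rfl⟩
        rw [Set.one_le_encard_iff_nonempty]
        obtain ⟨v⟩ := hv
        by_cases hvW : v ∈ W
        · exact ⟨v, hvW⟩
        · obtain ⟨w, hw, -⟩ := hdom v hvW
          exact ⟨w, hw⟩
      rw [h] at h1
      exact absurd h1 (by simp)
    · intro h
      rw [Ddim, if_pos h]
  have equiv2 : Nat.card (CZDVertex R) = 1 ↔
      (∀ x ∈ Zstar R, ∀ y ∈ Zstar R, x ≠ y → x * y = 0) := by
    constructor
    · intro h x hx y hy _
      have hsub : Subsingleton (CZDVertex R) := (Nat.card_eq_one_iff_unique.mp h).1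
      have hann : ∀ a ∈ Zstar R, ∀ b ∈ Zstar R, annSet R a = annSet R b := by
        intro a ha b hb
        exact Quotient.exact (Subsingleton.elim (⟦⟨a, ha⟩⟧ : CZDVertex R) ⟦⟨b, hb⟩⟧)
      exact mul_eq_zero_of_ann_eq hann x hx y hy
    · intro hcomp
      have hsq := sq_zero_of_complete hiso hcomp
      have key : ∀ a ∈ Zstar R, ∀ b ∈ Zstar R, ∀ t, a * t = 0 → b * t = 0 := by
        intro a ha b hb t hat
        by_cases ht0 : t = 0
        · rw [ht0, mul_zero]
        · have htZ : t ∈ Zstar R := ⟨ht0, a, ha.1, by rwa [mul_comm]⟩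
          by_cases htb : t = b
          · rw [htb, ← htb] at *
            rw [htb]
            exact hsq b hb
          · rw [mul_comm]
            exact hcomp t htZ b hb htb
      have hann : ∀ a ∈ Zstar R, ∀ b ∈ Zstar R, annSet R a = annSet R b := by
        intro a ha b hb
        exact Set.ext fun t => ⟨key a ha b hb t, key b hb a ha t⟩
      rw [Nat.card_eq_one_iff_unique]
      refine ⟨⟨fun u v => ?_⟩, hv⟩
      exact Quotient.inductionOn₂ u v fun a b => Quotient.sound (hann a.1 a.2 b.1 b.2)
  exact ⟨part1, part1.trans equiv2⟩
end

section
/- Let R be a finite commutative ring with identity whose set of nonzero zero-divisors is the disjoint union of two nonempty sets U and V such that for all nonzero zero-divisors x, y (including x = y), xy = 0 if and only if x and y lie in different parts (i.e., Γ(R) is a complete bipartite graph with parts U and V and no zero-divisor squares to zero). Then all elements of U have one common annihilator, all elements of V have another common annihilator, these two annihilators are distinct, Γ_E(R) is isomorphic to K_{1,1} (a single edge on two vertices), and Ddim(Γ_E(R)) = 1. -/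
open SimpleGraph

/-- If the nonzero zero-divisors of a finite commutative ring `R`
split as a disjoint union of nonempty sets `U` and `V` such that for all
nonzero zero-divisors `x, y` (including `x = y`) one has `x * y = 0` iff `x`
and `y` lie in different parts, then all elements of `U` share one annihilator,
all elements of `V` share another, the two annihilators are distinct,
`Γ_E(R) ≅ K_{1,1}`, and `Ddim (Γ_E R) = 1`. -/
theorem stmt_3 (R : Type*) [CommRing R] [Finite R] (U V : Set R)
    (hUV : Zstar R = U ∪ V) (hdisj : Disjoint U V)
    (hU : U.Nonempty) (hV : V.Nonempty)
    (hadj : ∀ x ∈ Zstar R, ∀ y ∈ Zstar R,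
      (x * y = 0 ↔ (x ∈ U ∧ y ∈ V) ∨ (x ∈ V ∧ y ∈ U))) :
    (∃ A B : Set R, (∀ u ∈ U, annSet R u = A) ∧ (∀ v ∈ V, annSet R v = B) ∧ A ≠ B) ∧
    Nonempty (CZDG R ≃g (⊤ : SimpleGraph (Fin 2))) ∧
    Ddim (CZDG R) = 1 := by
  classical
  -- basic inclusions
  have hUZ : U ⊆ Zstar R := hUV ▸ Set.subset_union_left
  have hVZ : V ⊆ Zstar R := hUV ▸ Set.subset_union_right
  obtain ⟨u₀, hu₀⟩ := hU
  obtain ⟨v₀, hv₀⟩ := hV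
  have hu₀V : u₀ ∉ V := fun h => Set.disjoint_left.mp hdisj hu₀ h
  have hv₀U : v₀ ∉ U := fun h => Set.disjoint_left.mp hdisj h hv₀
  have hannU : ∀ u ∈ U, annSet R u = V ∪ {0} := by
    intro u hu
    ext y
    simp only [annSet, Set.mem_setOf_eq, Set.mem_union, Set.mem_singleton_iff]
    constructor
    · intro h
      by_cases hy : y = 0
      · exact Or.inr hy
      · left
        have hyZ : y ∈ Zstar R := ⟨hy, u, (hUZ hu).1, by rwa [mul_comm]⟩
        rcases (hadj u (hUZ hu) y hyZ).1 h with ⟨_, hv⟩ | ⟨huV, _⟩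
        · exact hv
        · exact absurd huV (fun h' => Set.disjoint_left.mp hdisj hu h')
    · rintro (hyV | rfl)
      · exact (hadj u (hUZ hu) y (hVZ hyV)).2 (Or.inl ⟨hu, hyV⟩)
      · exact mul_zero u
  have hannV : ∀ v ∈ V, annSet R v = U ∪ {0} := by
    intro v hv
    ext y
    simp only [annSet, Set.mem_setOf_eq, Set.mem_union, Set.mem_singleton_iff]
    constructor
    · intro h
      by_cases hy : y = 0
      · exact Or.inr hy
      · left
        have hyZ : y ∈ Zstar R := ⟨hy, v, (hVZ hv).1, by rwa [mul_comm]⟩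
        rcases (hadj v (hVZ hv) y hyZ).1 h with ⟨hvU, _⟩ | ⟨_, hu⟩
        · exact absurd hvU (fun h' => Set.disjoint_left.mp hdisj h' hv)
        · exact hu
    · rintro (hyU | rfl)
      · exact (hadj v (hVZ hv) y (hUZ hyU)).2 (Or.inr ⟨hv, hyU⟩)
      · exact mul_zero v
  have hAB : (V ∪ {0} : Set R) ≠ (U ∪ {0} : Set R) := by
    intro h
    have : u₀ ∈ (V ∪ {0} : Set R) := h ▸ Or.inl hu₀
    rcases this with h' | h'
    · exact hu₀V h'
    · exact (hUZ hu₀).1 h'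
  -- the two vertices
  set uS : Zstar R := ⟨u₀, hUZ hu₀⟩ with huS
  set vS : Zstar R := ⟨v₀, hVZ hv₀⟩ with hvS
  have hne : (⟦uS⟧ : CZDVertex R) ≠ ⟦vS⟧ := by
    intro h
    have h' := Quotient.exact h
    have : annSet R u₀ = annSet R v₀ := h'
    rw [hannU _ hu₀, hannV _ hv₀] at this
    exact hAB this
  have htwo : ∀ q : CZDVertex R, q = ⟦uS⟧ ∨ q = ⟦vS⟧ := by
    refine Quotient.ind ?_
    intro a
    have ha : (a : R) ∈ U ∪ V := hUV.le a.2
    rcases ha with h | h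
    · exact Or.inl (Quotient.sound (show annSet R a.1 = annSet R u₀ by
        rw [hannU _ h, hannU _ hu₀]))
    · exact Or.inr (Quotient.sound (show annSet R a.1 = annSet R v₀ by
        rw [hannV _ h, hannV _ hv₀]))
  have hmul : (u₀ : R) * v₀ = 0 :=
    (hadj u₀ (hUZ hu₀) v₀ (hVZ hv₀)).2 (Or.inl ⟨hu₀, hv₀⟩)
  have hAdjuv : (CZDG R).Adj ⟦uS⟧ ⟦vS⟧ := ⟨hne, uS, vS, rfl, rfl, hmul⟩
  have hadj' : ∀ a b : CZDVertex R, (CZDG R).Adj a b ↔ a ≠ b := by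
    intro a b
    constructor
    · exact fun h => h.1
    · intro hab
      rcases htwo a with ha | ha <;> rcases htwo b with hb | hb <;>
        subst ha <;> subst hb
      · exact absurd rfl hab
      · exact hAdjuv
      · exact hAdjuv.symm
      · exact absurd rfl hab
  -- the equivalence with Fin 2
  have e : CZDVertex R ≃ Fin 2 :=
    { toFun := fun q => if q = ⟦uS⟧ then 0 else 1
      invFun := fun i => if i = 0 then ⟦uS⟧ else ⟦vS⟧
      left_inv := by
        intro q
        rcases htwo q with h | h <;> subst h <;> simp [hne.symm]
      right_inv := by
        have hne2 : ¬ (zdvSetoid R) uS vS := fun h => hne (Quotient.sound h)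
        have hne3 : ¬ (zdvSetoid R) vS uS := fun h => hne (Quotient.sound h).symm
        intro i
        fin_cases i <;> simp [hne, hne.symm, hne2, hne3] }
  have hcard : Nat.card (CZDVertex R) = 2 := by
    rw [Nat.card_congr e]
    simp
  have hiso : Nonempty (CZDG R ≃g (⊤ : SimpleGraph (Fin 2))) := by
    refine ⟨⟨e, ?_⟩⟩
    intro a b
    simp only [SimpleGraph.top_adj]
    rw [hadj' a b, not_iff_not.symm]
    simp only [ne_eq, not_not]
    exact ⟨fun h => e.injective h, fun h => h ▸ rfl⟩
  refine ⟨⟨V ∪ {0}, U ∪ {0}, hannU, hannV, hAB⟩, hiso, ?_⟩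
  -- the dominant metric dimension
  rw [Ddim, if_neg (by rw [hcard]; norm_num)]
  have hdist : (CZDG R).dist ⟦uS⟧ ⟦vS⟧ = 1 :=
    SimpleGraph.dist_eq_one_iff_adj.2 hAdjuv
  have hdist' : (CZDG R).dist ⟦vS⟧ ⟦uS⟧ = 1 :=
    SimpleGraph.dist_eq_one_iff_adj.2 hAdjuv.symm
  have hmem : (1 : ℕ∞) ∈ {n : ℕ∞ | ∃ W : Set (CZDVertex R),
      IsResolving (CZDG R) W ∧ IsDominating (CZDG R) W ∧ W.encard = n} := by
    refine ⟨{(⟦uS⟧ : CZDVertex R)}, ?_, ?_, Set.encard_singleton _⟩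
    · intro a b hab
      refine ⟨⟦uS⟧, rfl, ?_⟩
      rcases htwo a with ha | ha <;> rcases htwo b with hb | hb <;>
        subst ha <;> subst hb
      · exact absurd rfl hab
      · rw [(CZDG R).dist_self, hdist']; norm_num
      · rw [(CZDG R).dist_self, hdist']; norm_num
      · exact absurd rfl hab
    · intro a ha
      have : a ≠ ⟦uS⟧ := fun h => ha (h ▸ rfl)
      exact ⟨⟦uS⟧, rfl, (hadj' a ⟦uS⟧).2 this⟩
  refine le_antisymm (sInf_le hmem) (le_sInf ?_)
  rintro n ⟨W, hres, -, hWn⟩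
  rw [ENat.one_le_iff_ne_zero]
  rintro rfl
  rw [Set.encard_eq_zero] at hWn
  obtain ⟨w, hw, -⟩ := hres ⟦uS⟧ ⟦vS⟧ hne
  rw [hWn] at hw
  exact hw
end

section
/- Let R and S be reduced commutative rings with identity, each having at least one nonzero zero-divisor. If the zero-divisor graphs Γ(R) and Γ(S) are isomorphic as simple graphs, then the compressed zero-divisor graphs Γ_E(R) and Γ_E(S) are isomorphic as simple graphs. -/
open SimpleGraph

/-- The zero-divisor graph `Γ(R)` on the nonzero zero-divisors of `R`:
distinct vertices `x` and `y` are adjacent iff `x * y = 0`. -/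
def ZDG (R : Type*) [CommRing R] : SimpleGraph (Zstar R) where
  Adj x y := x ≠ y ∧ (x : R) * y = 0
  symm := by
    constructor
    rintro x y ⟨h, hxy⟩
    exact ⟨h.symm, by rwa [mul_comm]⟩
  loopless := by
    constructor
    rintro x ⟨h, -⟩
    exact h rfl


section Aux
variable {R : Type*} [CommRing R] [IsReduced R]

lemma zstar_ne_zero (a : Zstar R) : (a : R) ≠ 0 := a.2.1

lemma adj_iff_mul (a b : Zstar R) : (ZDG R).Adj a b ↔ (a : R) * b = 0 := by
  constructor
  · rintro ⟨-, h⟩; exact h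
  · intro h
    refine ⟨?_, h⟩
    rintro rfl
    exact zstar_ne_zero a (IsReduced.eq_zero _ ⟨2, by rw [pow_two]; exact h⟩)

lemma ann_eq_iff (a b : Zstar R) :
    annSet R a.1 = annSet R b.1 ↔ ∀ c : Zstar R, (a : R) * c = 0 ↔ (b : R) * c = 0 := by
  constructor
  · intro h c
    constructor
    · intro hc; have : (c : R) ∈ annSet R a.1 := hc; rw [h] at this; exact this
    · intro hc; have : (c : R) ∈ annSet R b.1 := hc; rw [← h] at this; exact this
  · intro h
    ext y
    by_cases hy : y = 0
    · subst hy; simp [annSet]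
    · constructor
      · intro hay
        exact (h ⟨y, hy, a, zstar_ne_zero a, by rwa [mul_comm]⟩).1 hay
      · intro hby
        exact (h ⟨y, hy, b, zstar_ne_zero b, by rwa [mul_comm]⟩).2 hby

lemma czdg_adj_iff (a b : Zstar R) :
    (CZDG R).Adj ⟦a⟧ ⟦b⟧ ↔ (⟦a⟧ : CZDVertex R) ≠ ⟦b⟧ ∧ (a : R) * b = 0 := by
  constructor
  · rintro ⟨hne, a', b', ha, hb, hab⟩
    refine ⟨hne, ?_⟩
    have ha' : annSet R a'.1 = annSet R a.1 := Quotient.exact ha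
    have hb' : annSet R b'.1 = annSet R b.1 := Quotient.exact hb
    have h1 : (b' : R) ∈ annSet R a.1 := ha' ▸ hab
    have h2 : (a : R) ∈ annSet R b.1 := hb' ▸ (show (a:R) ∈ annSet R b'.1 from by
      simpa [annSet, mul_comm] using h1)
    simpa [annSet, mul_comm] using h2
  · rintro ⟨hne, hab⟩
    exact ⟨hne, a, b, rfl, rfl, hab⟩

end Aux

/-- If `R` and `S` are reduced commutative rings, each with at
least one nonzero zero-divisor, and their zero-divisor graphs are isomorphic,
then their compressed zero-divisor graphs are isomorphic. -/
theorem stmt_4 (R S : Type*) [CommRing R] [CommRing S] [IsReduced R] [IsReduced S]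
    (hR : (Zstar R).Nonempty) (hS : (Zstar S).Nonempty)
    (h : Nonempty (ZDG R ≃g ZDG S)) :
    Nonempty (CZDG R ≃g CZDG S) := by
  obtain ⟨φ⟩ := h
  have key : ∀ a b : Zstar R, (zdvSetoid R).r a b ↔ (zdvSetoid S).r (φ a) (φ b) := by
    intro a b
    show annSet R a.1 = annSet R b.1 ↔ annSet S (φ a).1 = annSet S (φ b).1
    rw [ann_eq_iff, ann_eq_iff]
    constructor
    · intro h c
      have hc := h (φ.symm c)
      rw [← adj_iff_mul, ← adj_iff_mul] at hc ⊢
      rw [← φ.apply_symm_apply c, φ.map_adj_iff, φ.map_adj_iff]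
      exact hc
    · intro h c
      have hc := h (φ c)
      rw [← adj_iff_mul, ← adj_iff_mul] at hc ⊢
      rw [φ.map_adj_iff, φ.map_adj_iff] at hc
      exact hc
  let E : CZDVertex R ≃ CZDVertex S := Quotient.congr φ.toEquiv key
  refine ⟨⟨E, ?_⟩⟩
  intro u v
  induction u using Quotient.inductionOn with | h a =>
  induction v using Quotient.inductionOn with | h b =>
  have hE : ∀ x : Zstar R, E ⟦x⟧ = ⟦φ x⟧ := fun x => rfl
  rw [hE, hE, czdg_adj_iff, czdg_adj_iff]
  have h1 : (⟦φ a⟧ : CZDVertex S) = ⟦φ b⟧ ↔ (⟦a⟧ : CZDVertex R) = ⟦b⟧ := by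
    rw [Quotient.eq, Quotient.eq]
    exact (key a b).symm
  have h2 : ((φ a : S) * φ b = 0) ↔ ((a : R) * b = 0) := by
    rw [← adj_iff_mul, ← adj_iff_mul, φ.map_adj_iff]
  exact and_congr (not_congr h1) h2
end

section
/- Let p be an odd prime and n = 2p. The nonzero zero-divisors of Z_n fall into exactly two annihilator-equivalence classes, namely [p] and [2] (the class of p and the class of all nonzero even residues), and these two vertices of Γ_E(Z_n) are adjacent; hence Γ_E(Z_n) is isomorphic to K_{1,1} and Ddim(Γ_E(Z_n)) = 1. -/
open SimpleGraph

/-- For an odd prime `p` and `n = 2p`, the nonzero zero-divisors of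
`ℤ/n` fall into exactly two annihilator classes, those of `p` and of `2`, and
the corresponding two vertices of `Γ_E(ℤ/n)` are adjacent; hence
`Γ_E(ℤ/n) ≅ K_{1,1}` and `Ddim (Γ_E (ℤ/n)) = 1`. -/
theorem stmt_6 (p : ℕ) (hp : p.Prime) (hodd : p ≠ 2) :
    ∃ (hpz : (p : ZMod (2 * p)) ∈ Zstar (ZMod (2 * p)))
      (h2z : (2 : ZMod (2 * p)) ∈ Zstar (ZMod (2 * p))),
      (∀ x ∈ Zstar (ZMod (2 * p)),
        annSet (ZMod (2 * p)) x = annSet (ZMod (2 * p)) (p : ZMod (2 * p)) ∨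
        annSet (ZMod (2 * p)) x = annSet (ZMod (2 * p)) (2 : ZMod (2 * p))) ∧
      annSet (ZMod (2 * p)) (p : ZMod (2 * p)) ≠ annSet (ZMod (2 * p)) (2 : ZMod (2 * p)) ∧
      (CZDG (ZMod (2 * p))).Adj ⟦⟨(p : ZMod (2 * p)), hpz⟩⟧ ⟦⟨(2 : ZMod (2 * p)), h2z⟩⟧ ∧
      Nonempty (CZDG (ZMod (2 * p)) ≃g (⊤ : SimpleGraph (Fin 2))) ∧
      Ddim (CZDG (ZMod (2 * p))) = 1 := by
  
  classical
  haveI : Fact p.Prime := ⟨hp⟩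
  have hp2 : 2 < p := lt_of_le_of_ne hp.two_le (Ne.symm hodd)
  have hp0 : 0 < p := hp.pos
  haveI : NeZero (2 * p) := ⟨by omega⟩
  set n := 2 * p with hn_def
  have hpodd : ¬ 2 ∣ p := by
    intro h
    rcases (hp.eq_one_or_self_of_dvd 2 h) with h | h
    · omega
    · exact hodd h.symm
  have key : ∀ x y : ZMod n, x * y = 0 ↔ n ∣ x.val * y.val := by
    intro x y
    have hxy : x * y = ((x.val * y.val : ℕ) : ZMod n) := by
      push_cast
      rw [ZMod.natCast_zmod_val, ZMod.natCast_zmod_val]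
    rw [hxy, ZMod.natCast_eq_zero_iff]
  have hvp : (p : ZMod n).val = p := ZMod.val_natCast_of_lt (by omega)
  have h2cast : (2 : ZMod n) = ((2 : ℕ) : ZMod n) := by norm_cast
  have hv2 : (2 : ZMod n).val = 2 := by
    rw [h2cast]; exact ZMod.val_natCast_of_lt (by omega)
  have hpne : (p : ZMod n) ≠ 0 := by
    rw [Ne, ZMod.natCast_eq_zero_iff]
    intro h
    have := Nat.le_of_dvd hp0 h
    omega
  have h2ne : (2 : ZMod n) ≠ 0 := by
    rw [h2cast, Ne, ZMod.natCast_eq_zero_iff]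
    intro h
    have := Nat.le_of_dvd (by norm_num) h
    omega
  have hmul : (p : ZMod n) * 2 = 0 := by
    rw [key, hvp, hv2]
    exact ⟨1, by ring⟩
  have hpz : (p : ZMod n) ∈ Zstar (ZMod n) := ⟨hpne, 2, h2ne, hmul⟩
  have h2z : (2 : ZMod n) ∈ Zstar (ZMod n) := ⟨h2ne, p, hpne, by rw [mul_comm]; exact hmul⟩
  have annp : annSet (ZMod n) (p : ZMod n) = {y : ZMod n | 2 ∣ y.val} := by
    ext y
    simp only [annSet, Set.mem_setOf_eq, key, hvp]
    constructor
    · rintro ⟨k, hk⟩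
      refine ⟨k, Nat.eq_of_mul_eq_mul_left hp0 ?_⟩
      rw [hk]; ring
    · rintro ⟨k, hk⟩
      exact ⟨k, by rw [hk]; ring⟩
  have ann2 : ∀ x : ZMod n, 2 ∣ x.val → ¬ p ∣ x.val →
      annSet (ZMod n) x = {y : ZMod n | p ∣ y.val} := by
    intro x h2x hpx
    ext y
    simp only [annSet, Set.mem_setOf_eq, key]
    constructor
    · intro h
      have hpdvd : p ∣ x.val * y.val := dvd_trans ⟨2, by ring⟩ h
      exact ((Nat.Prime.dvd_mul hp).mp hpdvd).resolve_left hpx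
    · rintro ⟨k, hk⟩
      rcases h2x with ⟨m, hm⟩
      exact ⟨m * k, by rw [hk, hm]; ring⟩
  have ann2' : annSet (ZMod n) (2 : ZMod n) = {y : ZMod n | p ∣ y.val} := by
    refine ann2 _ ?_ ?_
    · rw [hv2]
    · rw [hv2]
      intro h
      have := Nat.le_of_dvd (by norm_num) h
      omega
  have classify : ∀ x ∈ Zstar (ZMod n),
      x = (p : ZMod n) ∨ (2 ∣ x.val ∧ ¬ p ∣ x.val) := by
    rintro x ⟨hx, y, hy, hxy⟩
    have hdvd : n ∣ x.val * y.val := (key x y).mp hxy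
    have hxv : x.val ≠ 0 := fun h => hx (by rw [← ZMod.natCast_zmod_val x, h]; simp)
    have hyv : y.val ≠ 0 := fun h => hy (by rw [← ZMod.natCast_zmod_val y, h]; simp)
    have hxlt : x.val < n := ZMod.val_lt x
    have hylt : y.val < n := ZMod.val_lt y
    by_cases hpx : p ∣ x.val
    · by_cases h2x : (2 : ℕ) ∣ x.val
      · exfalso
        have hcop : Nat.Coprime 2 p := (Nat.coprime_primes Nat.prime_two hp).mpr (Ne.symm hodd)
        have hnd : n ∣ x.val := Nat.Coprime.mul_dvd_of_dvd_of_dvd hcop h2x hpx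
        have := Nat.le_of_dvd (Nat.pos_of_ne_zero hxv) hnd
        omega
      · left
        rcases hpx with ⟨k, hk⟩
        have hklt : p * k < p * 2 := by rw [← hk]; omega
        have hk2 : k < 2 := lt_of_mul_lt_mul_left hklt (Nat.zero_le p)
        have hk0 : k ≠ 0 := by rintro rfl; rw [Nat.mul_zero] at hk; exact hxv hk
        have hk1 : k = 1 := by omega
        have hxval : x.val = p := by rw [hk, hk1, Nat.mul_one]
        rw [← ZMod.natCast_zmod_val x, hxval]
    · right
      refine ⟨?_, hpx⟩
      by_contra h2x
      have hcop2 : Nat.Coprime 2 x.val := (Nat.Prime.coprime_iff_not_dvd Nat.prime_two).mpr h2x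
      have hcopp : Nat.Coprime p x.val := (Nat.Prime.coprime_iff_not_dvd hp).mpr hpx
      have hcop : Nat.Coprime n x.val := Nat.Coprime.mul hcop2 hcopp
      have : n ∣ y.val := hcop.dvd_of_dvd_mul_left hdvd
      have := Nat.le_of_dvd (Nat.pos_of_ne_zero hyv) this
      omega
  have classAnn : ∀ x ∈ Zstar (ZMod n),
      annSet (ZMod n) x = annSet (ZMod n) (p : ZMod n) ∨
      annSet (ZMod n) x = annSet (ZMod n) (2 : ZMod n) := by
    intro x hx
    rcases classify x hx with h | ⟨h2, hnp⟩
    · left; rw [h]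
    · right; rw [ann2 x h2 hnp, ann2']
  have annNe : annSet (ZMod n) (p : ZMod n) ≠ annSet (ZMod n) (2 : ZMod n) := by
    rw [annp, ann2']
    intro h
    have hmem : (p : ZMod n) ∈ {y : ZMod n | p ∣ y.val} := by
      simp only [Set.mem_setOf_eq, hvp]
      exact dvd_refl p
    rw [← h] at hmem
    simp only [Set.mem_setOf_eq, hvp] at hmem
    exact hpodd hmem
  refine ⟨hpz, h2z, classAnn, annNe, ?_⟩
  set vp : CZDVertex (ZMod n) := ⟦⟨(p : ZMod n), hpz⟩⟧ with hvpdef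
  set v2 : CZDVertex (ZMod n) := ⟦⟨(2 : ZMod n), h2z⟩⟧ with hv2def
  have hne : vp ≠ v2 := fun h => annNe (Quotient.exact h)
  have hadj : (CZDG (ZMod n)).Adj vp v2 :=
    ⟨hne, ⟨(p : ZMod n), hpz⟩, ⟨(2 : ZMod n), h2z⟩, rfl, rfl, hmul⟩
  have hvertex : ∀ v : CZDVertex (ZMod n), v = vp ∨ v = v2 := by
    intro v
    induction v using Quotient.inductionOn with
    | h x =>
      rcases classAnn x.1 x.2 with h | h
      · left; exact Quotient.sound h
      · right; exact Quotient.sound h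
  have hAdjIff : ∀ u v : CZDVertex (ZMod n), (CZDG (ZMod n)).Adj u v ↔ u ≠ v := by
    intro u v
    constructor
    · exact fun h => h.1
    · intro huv
      rcases hvertex u with rfl | rfl <;> rcases hvertex v with rfl | rfl
      · exact absurd rfl huv
      · exact hadj
      · exact hadj.symm
      · exact absurd rfl huv
  let e : CZDVertex (ZMod n) ≃ Fin 2 :=
    { toFun := fun v => if v = vp then 0 else 1
      invFun := fun i => if i = 0 then vp else v2
      left_inv := by
        intro v
        rcases hvertex v with rfl | rfl
        · simp
        · simp [Ne.symm hne]
      right_inv := by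
        intro i
        fin_cases i
        · simp
        · simp [Ne.symm hne] }
  have hiso : Nonempty (CZDG (ZMod n) ≃g (⊤ : SimpleGraph (Fin 2))) := by
    refine ⟨⟨e, ?_⟩⟩
    intro a b
    rw [SimpleGraph.top_adj, hAdjIff a b, Ne, Ne, e.apply_eq_iff_eq]
  refine ⟨hadj, hiso, ?_⟩
  have hcard : Nat.card (CZDVertex (ZMod n)) = 2 := by
    rw [Nat.card_congr e]; simp
  have hdist0 : (CZDG (ZMod n)).dist vp vp = 0 := SimpleGraph.dist_self
  have hdist1 : (CZDG (ZMod n)).dist v2 vp = 1 :=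
    SimpleGraph.dist_eq_one_iff_adj.mpr hadj.symm
  rw [Ddim, if_neg (by rw [hcard]; omega)]
  apply le_antisymm
  · apply sInf_le
    refine ⟨{vp}, ?_, ?_, Set.encard_singleton vp⟩
    · intro u v huv
      refine ⟨vp, Set.mem_singleton _, ?_⟩
      rcases hvertex u with rfl | rfl <;> rcases hvertex v with rfl | rfl
      · exact absurd rfl huv
      · rw [hdist0, hdist1]; omega
      · rw [hdist0, hdist1]; omega
      · exact absurd rfl huv
    · intro v hv
      rcases hvertex v with rfl | rfl
      · exact absurd (Set.mem_singleton _) hv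
      · exact ⟨vp, Set.mem_singleton _, hadj.symm⟩
  · apply le_sInf
    rintro m ⟨W, hres, hdom, hWm⟩
    rcases eq_or_ne m 0 with rfl | hm
    · exfalso
      have hW : W = ∅ := Set.encard_eq_zero.mp hWm
      rcases hdom vp (by simp [hW]) with ⟨w, hw, -⟩
      simp [hW] at hw
    · exact ENat.one_le_iff_ne_zero.mpr hm
end

section
/- Let R be a commutative ring with identity such that the compressed zero-divisor graph Γ_E(R) has exactly three vertices. Then Γ_E(R) is a path on three vertices (i.e., exactly two of the three pairs of distinct vertices are adjacent). -/
open SimpleGraph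

section Aux

variable {R : Type*} [CommRing R]

private lemma ann_eq_of_mk_eq {a b : Zstar R} (h : (⟦a⟧ : CZDVertex R) = ⟦b⟧) :
    annSet R a.1 = annSet R b.1 := Quotient.exact h

private lemma mk_eq_of_ann_eq {a b : Zstar R} (h : annSet R a.1 = annSet R b.1) :
    (⟦a⟧ : CZDVertex R) = ⟦b⟧ := Quotient.sound h

private lemma mem_ann {x y : R} : y ∈ annSet R x ↔ x * y = 0 := Iff.rfl

private lemma adj_iff (a b : Zstar R) :
    (CZDG R).Adj ⟦a⟧ ⟦b⟧ ↔ (⟦a⟧ : CZDVertex R) ≠ ⟦b⟧ ∧ a.1 * b.1 = 0 := by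
  constructor
  · rintro ⟨h, a', b', ha, hb, hab⟩
    refine ⟨h, ?_⟩
    have h1 : annSet R a'.1 = annSet R a.1 := ann_eq_of_mk_eq ha
    have h2 : annSet R b'.1 = annSet R b.1 := ann_eq_of_mk_eq hb
    have hb' : b'.1 ∈ annSet R a.1 := by rw [← h1]; exact hab
    have ha' : a.1 ∈ annSet R b.1 := by
      rw [← h2]
      show b'.1 * a.1 = 0
      rw [mul_comm]; exact hb'
    rw [mul_comm]; exact ha'
  · rintro ⟨h, hab⟩
    exact ⟨h, a, b, rfl, rfl, hab⟩

/-- Square-zero lemma: if the three classes of `a,b,c` exhaust all classes,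
are pairwise distinct, and form a triangle, then `a² = 0` or `b² = 0`. -/
private lemma lemS {a b c : Zstar R}
    (cover : ∀ z : Zstar R, (⟦z⟧ : CZDVertex R) = ⟦a⟧ ∨ (⟦z⟧ : CZDVertex R) = ⟦b⟧ ∨
      (⟦z⟧ : CZDVertex R) = ⟦c⟧)
    (hne : (⟦a⟧ : CZDVertex R) ≠ ⟦b⟧)
    (hab : a.1 * b.1 = 0) (hac : a.1 * c.1 = 0) (hbc : b.1 * c.1 = 0) :
    a.1 * a.1 = 0 ∨ b.1 * b.1 = 0 := by
  have hba : b.1 * a.1 = 0 := by rw [mul_comm]; exact hab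
  have hs0 : a.1 + b.1 ≠ 0 := by
    intro h
    apply hne
    apply mk_eq_of_ann_eq
    have hb : b.1 = -a.1 := by linear_combination h
    ext y
    simp only [annSet, Set.mem_setOf_eq, hb, neg_mul, neg_eq_zero]
  have hsc : (a.1 + b.1) * c.1 = 0 := by rw [add_mul, hac, hbc, add_zero]
  have hsZ : (a.1 + b.1) ∈ Zstar R := ⟨hs0, c.1, c.2.1, hsc⟩
  rcases cover ⟨_, hsZ⟩ with h | h | h
  · right
    have hann := ann_eq_of_mk_eq h
    have hbmem : b.1 ∈ annSet R a.1 := hab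
    rw [← hann] at hbmem
    have : (a.1 + b.1) * b.1 = 0 := hbmem
    rwa [add_mul, hab, zero_add] at this
  · left
    have hann := ann_eq_of_mk_eq h
    have hamem : a.1 ∈ annSet R b.1 := hba
    rw [← hann] at hamem
    have : (a.1 + b.1) * a.1 = 0 := hamem
    rwa [add_mul, hba, add_zero] at this
  · left
    have hann := ann_eq_of_mk_eq h
    have hamem : a.1 ∈ annSet R c.1 := by show c.1 * a.1 = 0; rw [mul_comm]; exact hac
    rw [← hann] at hamem
    have : (a.1 + b.1) * a.1 = 0 := hamem
    rwa [add_mul, hba, add_zero] at this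

/-- One-sided square-nonzero lemma: a witness killing `a` but not `b`
forces `b² ≠ 0`. -/
private lemma lemN₁ {a b c : Zstar R}
    (cover : ∀ z : Zstar R, (⟦z⟧ : CZDVertex R) = ⟦a⟧ ∨ (⟦z⟧ : CZDVertex R) = ⟦b⟧ ∨
      (⟦z⟧ : CZDVertex R) = ⟦c⟧)
    (hab : a.1 * b.1 = 0) (hbc : b.1 * c.1 = 0)
    {x : R} (hxa : a.1 * x = 0) (hxb : b.1 * x ≠ 0) : b.1 * b.1 ≠ 0 := by
  have hx0 : x ≠ 0 := by rintro rfl; exact hxb (mul_zero _)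
  have hxZ : x ∈ Zstar R := ⟨hx0, a.1, a.2.1, by rw [mul_comm]; exact hxa⟩
  rcases cover ⟨x, hxZ⟩ with h | h | h
  · exfalso
    have hann := ann_eq_of_mk_eq h
    have hbmem : b.1 ∈ annSet R a.1 := hab
    rw [← hann] at hbmem
    exact hxb (by rw [mul_comm]; exact hbmem)
  · intro hbb
    have hann := ann_eq_of_mk_eq h
    have hbmem : b.1 ∈ annSet R b.1 := hbb
    rw [← hann] at hbmem
    exact hxb (by rw [mul_comm]; exact hbmem)
  · exfalso
    have hann := ann_eq_of_mk_eq h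
    have hbmem : b.1 ∈ annSet R c.1 := by show c.1 * b.1 = 0; rw [mul_comm]; exact hbc
    rw [← hann] at hbmem
    exact hxb (by rw [mul_comm]; exact hbmem)

/-- Square-nonzero lemma: in a triangle with all three classes, `a² ≠ 0` or `b² ≠ 0`. -/
private lemma lemN {a b c : Zstar R}
    (cover : ∀ z : Zstar R, (⟦z⟧ : CZDVertex R) = ⟦a⟧ ∨ (⟦z⟧ : CZDVertex R) = ⟦b⟧ ∨
      (⟦z⟧ : CZDVertex R) = ⟦c⟧)
    (hne : (⟦a⟧ : CZDVertex R) ≠ ⟦b⟧)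
    (hab : a.1 * b.1 = 0) (hac : a.1 * c.1 = 0) (hbc : b.1 * c.1 = 0) :
    a.1 * a.1 ≠ 0 ∨ b.1 * b.1 ≠ 0 := by
  have hanne : annSet R a.1 ≠ annSet R b.1 := fun h => hne (mk_eq_of_ann_eq h)
  rw [Ne, Set.ext_iff] at hanne
  push_neg at hanne
  obtain ⟨x, hx⟩ := hanne
  rcases hx with ⟨hxa, hxb⟩ | ⟨hxa, hxb⟩
  · right
    exact lemN₁ cover hab hbc hxa hxb
  · left
    have cover' : ∀ z : Zstar R, (⟦z⟧ : CZDVertex R) = ⟦b⟧ ∨ (⟦z⟧ : CZDVertex R) = ⟦a⟧ ∨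
        (⟦z⟧ : CZDVertex R) = ⟦c⟧ := fun z => by rcases cover z with h | h | h <;> tauto
    exact lemN₁ cover' (by rw [mul_comm]; exact hab) hac hxb hxa

/-- With exactly three classes there is no triangle. -/
private lemma no_triangle {a b c : Zstar R}
    (cover : ∀ z : Zstar R, (⟦z⟧ : CZDVertex R) = ⟦a⟧ ∨ (⟦z⟧ : CZDVertex R) = ⟦b⟧ ∨
      (⟦z⟧ : CZDVertex R) = ⟦c⟧)
    (hpq : (⟦a⟧ : CZDVertex R) ≠ ⟦b⟧) (hpr : (⟦a⟧ : CZDVertex R) ≠ ⟦c⟧)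
    (hqr : (⟦b⟧ : CZDVertex R) ≠ ⟦c⟧)
    (hab : a.1 * b.1 = 0) (hac : a.1 * c.1 = 0) (hbc : b.1 * c.1 = 0) : False := by
  have coverbca : ∀ z : Zstar R, (⟦z⟧ : CZDVertex R) = ⟦b⟧ ∨ (⟦z⟧ : CZDVertex R) = ⟦c⟧ ∨
      (⟦z⟧ : CZDVertex R) = ⟦a⟧ := fun z => by rcases cover z with h | h | h <;> tauto
  have coveracb : ∀ z : Zstar R, (⟦z⟧ : CZDVertex R) = ⟦a⟧ ∨ (⟦z⟧ : CZDVertex R) = ⟦c⟧ ∨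
      (⟦z⟧ : CZDVertex R) = ⟦b⟧ := fun z => by rcases cover z with h | h | h <;> tauto
  have hcb : c.1 * b.1 = 0 := by rw [mul_comm]; exact hbc
  have hca : c.1 * a.1 = 0 := by rw [mul_comm]; exact hac
  have hba : b.1 * a.1 = 0 := by rw [mul_comm]; exact hab
  have s1 := lemS cover hpq hab hac hbc
  have s2 := lemS coverbca hqr hbc hba hca
  have s3 := lemS coveracb hpr hac hab hcb
  have n1 := lemN cover hpq hab hac hbc
  have n2 := lemN coverbca hqr hbc hba hca
  have n3 := lemN coveracb hpr hac hab hcb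
  tauto

/-- Connectivity: if two of the three classes are non-adjacent, the third is
adjacent to both. -/
private lemma connect {a b c : Zstar R}
    (cover : ∀ z : Zstar R, (⟦z⟧ : CZDVertex R) = ⟦a⟧ ∨ (⟦z⟧ : CZDVertex R) = ⟦b⟧ ∨
      (⟦z⟧ : CZDVertex R) = ⟦c⟧)
    (hpq : (⟦a⟧ : CZDVertex R) ≠ ⟦b⟧) (hpr : (⟦a⟧ : CZDVertex R) ≠ ⟦c⟧)
    (hqr : (⟦b⟧ : CZDVertex R) ≠ ⟦c⟧)
    (hab : a.1 * b.1 ≠ 0) :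
    (CZDG R).Adj ⟦a⟧ ⟦c⟧ ∧ (CZDG R).Adj ⟦b⟧ ⟦c⟧ := by
  have key : ∀ y : R, y ≠ 0 → a.1 * y = 0 → b.1 * y = 0 →
      (CZDG R).Adj ⟦a⟧ ⟦c⟧ ∧ (CZDG R).Adj ⟦b⟧ ⟦c⟧ := by
    intro y hy0 hay hby
    have hyZ : y ∈ Zstar R := ⟨hy0, a.1, a.2.1, by rw [mul_comm]; exact hay⟩
    rcases cover ⟨y, hyZ⟩ with h | h | h
    · exfalso
      have hann := ann_eq_of_mk_eq h
      have : b.1 ∈ annSet R (⟨y, hyZ⟩ : Zstar R).1 := by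
        show y * b.1 = 0; rw [mul_comm]; exact hby
      rw [hann] at this
      exact hab this
    · exfalso
      have hann := ann_eq_of_mk_eq h
      have : a.1 ∈ annSet R (⟨y, hyZ⟩ : Zstar R).1 := by
        show y * a.1 = 0; rw [mul_comm]; exact hay
      rw [hann] at this
      exact hab (by rw [mul_comm]; exact this)
    · exact ⟨⟨hpr, a, ⟨y, hyZ⟩, rfl, h, hay⟩, ⟨hqr, b, ⟨y, hyZ⟩, rfl, h, hby⟩⟩
  obtain ⟨x, hx0, hax⟩ := a.2.2
  obtain ⟨z, hz0, hbz⟩ := b.2.2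
  by_cases hxz : x * z = 0
  · have hxZ : x ∈ Zstar R := ⟨hx0, a.1, a.2.1, by rw [mul_comm]; exact hax⟩
    rcases cover ⟨x, hxZ⟩ with h | h | h
    · -- ann x = ann a, and x kills z, so a kills z : common killer z
      have hann := ann_eq_of_mk_eq h
      have : z ∈ annSet R (⟨x, hxZ⟩ : Zstar R).1 := hxz
      rw [hann] at this
      exact key z hz0 this hbz
    · exfalso
      have hann := ann_eq_of_mk_eq h
      have : a.1 ∈ annSet R (⟨x, hxZ⟩ : Zstar R).1 := by
        show x * a.1 = 0; rw [mul_comm]; exact hax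
      rw [hann] at this
      exact hab (by rw [mul_comm]; exact this)
    · -- ⟦x⟧ = ⟦c⟧, so a is adjacent to c via x; now analyse z
      have hadj1 : (CZDG R).Adj ⟦a⟧ ⟦c⟧ := ⟨hpr, a, ⟨x, hxZ⟩, rfl, h, hax⟩
      have hzZ : z ∈ Zstar R := ⟨hz0, b.1, b.2.1, by rw [mul_comm]; exact hbz⟩
      rcases cover ⟨z, hzZ⟩ with h' | h' | h'
      · exfalso
        have hann := ann_eq_of_mk_eq h'
        have : b.1 ∈ annSet R (⟨z, hzZ⟩ : Zstar R).1 := by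
          show z * b.1 = 0; rw [mul_comm]; exact hbz
        rw [hann] at this
        exact hab this
      · -- ann z = ann b, z kills x, so b kills x : common killer x
        have hann := ann_eq_of_mk_eq h'
        have : x ∈ annSet R (⟨z, hzZ⟩ : Zstar R).1 := by
          show z * x = 0; rw [mul_comm]; exact hxz
        rw [hann] at this
        exact key x hx0 hax this
      · exact ⟨hadj1, ⟨hqr, b, ⟨z, hzZ⟩, rfl, h', hbz⟩⟩
  · refine key (x * z) hxz ?_ ?_
    · rw [← mul_assoc, hax, zero_mul]
    · rw [mul_comm x z, ← mul_assoc, hbz, zero_mul]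

end Aux

/-- If `Γ_E(R)` has exactly three vertices, then it is a path on
three vertices: exactly two of the three pairs of distinct vertices are
adjacent. -/
theorem stmt_14 (R : Type*) [CommRing R] (h3 : Nat.card (CZDVertex R) = 3) :
    ∃ a b c : CZDVertex R, a ≠ b ∧ a ≠ c ∧ b ≠ c ∧
      (∀ v : CZDVertex R, v = a ∨ v = b ∨ v = c) ∧
      (CZDG R).Adj a b ∧ (CZDG R).Adj b c ∧ ¬(CZDG R).Adj a c := by
  classical
  have hfin : Finite (CZDVertex R) := by
    by_contra h
    rw [not_finite_iff_infinite] at h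
    rw [Nat.card_eq_zero_of_infinite] at h3
    exact absurd h3 (by norm_num)
  cases nonempty_fintype (CZDVertex R)
  rw [Nat.card_eq_fintype_card, ← Finset.card_univ] at h3
  obtain ⟨p, q, r, hpq, hpr, hqr, huniv⟩ := Finset.card_eq_three.mp h3
  have coverV : ∀ v : CZDVertex R, v = p ∨ v = q ∨ v = r := by
    intro v
    have : v ∈ (Finset.univ : Finset (CZDVertex R)) := Finset.mem_univ v
    rw [huniv] at this
    simpa using this
  obtain ⟨a, ha⟩ := Quotient.exists_rep p
  obtain ⟨b, hb⟩ := Quotient.exists_rep q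
  obtain ⟨c, hc⟩ := Quotient.exists_rep r
  subst ha; subst hb; subst hc
  have cover : ∀ z : Zstar R, (⟦z⟧ : CZDVertex R) = ⟦a⟧ ∨ (⟦z⟧ : CZDVertex R) = ⟦b⟧ ∨
      (⟦z⟧ : CZDVertex R) = ⟦c⟧ := fun z => coverV ⟦z⟧
  by_cases h1 : (CZDG R).Adj ⟦a⟧ ⟦b⟧
  · by_cases h2 : (CZDG R).Adj ⟦a⟧ ⟦c⟧
    · by_cases h3' : (CZDG R).Adj ⟦b⟧ ⟦c⟧
      · exact absurd (no_triangle cover hpq hpr hqr ((adj_iff a b).mp h1).2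
          ((adj_iff a c).mp h2).2 ((adj_iff b c).mp h3').2) (by simp)
      · -- ⟦b⟧ and ⟦c⟧ not adjacent; third is ⟦a⟧
        have coverbca : ∀ z : Zstar R, (⟦z⟧ : CZDVertex R) = ⟦b⟧ ∨
            (⟦z⟧ : CZDVertex R) = ⟦c⟧ ∨ (⟦z⟧ : CZDVertex R) = ⟦a⟧ :=
          fun z => by rcases cover z with h | h | h <;> tauto
        have hbc : b.1 * c.1 ≠ 0 := fun h => h3' ((adj_iff b c).mpr ⟨hqr, h⟩)
        obtain ⟨hA1, hA2⟩ := connect coverbca hqr (Ne.symm hpq) (Ne.symm hpr) hbc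
        -- hA1 : Adj ⟦b⟧ ⟦a⟧, hA2 : Adj ⟦c⟧ ⟦a⟧
        exact ⟨⟦b⟧, ⟦a⟧, ⟦c⟧, Ne.symm hpq, hqr, hpr,
          fun v => by rcases coverV v with h | h | h <;> tauto,
          hA1, hA2.symm, h3'⟩
    · -- ⟦a⟧ and ⟦c⟧ not adjacent; third is ⟦b⟧
      have coveracb : ∀ z : Zstar R, (⟦z⟧ : CZDVertex R) = ⟦a⟧ ∨
          (⟦z⟧ : CZDVertex R) = ⟦c⟧ ∨ (⟦z⟧ : CZDVertex R) = ⟦b⟧ :=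
        fun z => by rcases cover z with h | h | h <;> tauto
      have hac : a.1 * c.1 ≠ 0 := fun h => h2 ((adj_iff a c).mpr ⟨hpr, h⟩)
      obtain ⟨hA1, hA2⟩ := connect coveracb hpr hpq (Ne.symm hqr) hac
      -- hA1 : Adj ⟦a⟧ ⟦b⟧, hA2 : Adj ⟦c⟧ ⟦b⟧
      exact ⟨⟦a⟧, ⟦b⟧, ⟦c⟧, hpq, hpr, hqr,
        fun v => by rcases coverV v with h | h | h <;> tauto,
        hA1, hA2.symm, h2⟩
  · -- ⟦a⟧ and ⟦b⟧ not adjacent; third is ⟦c⟧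
    have hab : a.1 * b.1 ≠ 0 := fun h => h1 ((adj_iff a b).mpr ⟨hpq, h⟩)
    obtain ⟨hA1, hA2⟩ := connect cover hpq hpr hqr hab
    -- hA1 : Adj ⟦a⟧ ⟦c⟧, hA2 : Adj ⟦b⟧ ⟦c⟧
    exact ⟨⟦a⟧, ⟦c⟧, ⟦b⟧, hpr, hpq, Ne.symm hqr,
      fun v => by rcases coverV v with h | h | h <;> tauto,
      hA1, hA2.symm, h1⟩
end
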